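/- Let p be a prime, let φ and φ' be the two roots of x² − x − 1 in F_{p²} (so that φ' = −φ⁻¹), and set l = ord_{F_{p²}^×}(φ) and l' = ord_{F_{p²}^×}(φ'). Then either l = l', or l' = 2l, or l = 2l'. In particular, max(l, l') is either equal to min(l, l') or equal to 2·min(l, l'). -/

import Mathlib

private lemma aux_nat_two (n m : ℕ) (hn : 0 < n) (hne : m ≠ n) (h1 : n ∣ m)
    (h2 : m ∣ 2 * n) : m = 2 * n := by
  obtain ⟨k, rfl⟩ := h1
  have hk : k ∣ 2 := by
    have : n * k ∣ n * 2 := by simpa [mul_comm] using h2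
    exact (Nat.mul_dvd_mul_iff_left hn).mp this
  rcases (Nat.dvd_prime Nat.prime_two).mp hk with rfl | rfl
  · simp at hne
  · ring

private lemma aux_even_dvd {G : Type*} [CommGroup G] [HasDistribNeg G]
    (u v : G) (h : v = -u⁻¹) (he : Even (orderOf u)) : orderOf v ∣ orderOf u := by
  apply orderOf_dvd_of_pow_eq_one
  have hv : v = (-1) * u⁻¹ := by rw [h, neg_one_mul]
  rw [hv, mul_pow, he.neg_one_pow, one_mul, inv_pow, pow_orderOf_eq_one, inv_one]

private lemma aux_odd {G : Type*} [CommGroup G] [HasDistribNeg G]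
    (u v : G) (h : v = -u⁻¹) (ho : Odd (orderOf u)) :
    v ^ orderOf u = -1 ∧ v ^ (2 * orderOf u) = 1 := by
  have hv : v = (-1) * u⁻¹ := by rw [h, neg_one_mul]
  have h1 : v ^ orderOf u = -1 := by
    rw [hv, mul_pow, ho.neg_one_pow, inv_pow, pow_orderOf_eq_one, inv_one, mul_one]
  refine ⟨h1, ?_⟩
  rw [two_mul, pow_add, h1, neg_mul_neg, one_mul]

/-- Let `p` be a prime and `φ, φ'` the two roots of `x² - x - 1` in `F_{p²}`
(so `φ · φ' = -1`, i.e. `φ' = -φ⁻¹`), with multiplicative orders `l, l'`. Then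
`l = l'` or `l' = 2l` or `l = 2l'`; in particular `max l l'` equals either
`min l l'` or `2 · min l l'`. -/
theorem orders_of_golden_roots (p : ℕ) [Fact p.Prime]
    (K : Type*) [Field K] [Fintype K] (hK : Fintype.card K = p ^ 2)
    (φ φ' : K) (hφ : φ ^ 2 = φ + 1) (hφ' : φ' ^ 2 = φ' + 1) (hprod : φ * φ' = -1) :
    (orderOf φ = orderOf φ' ∨ orderOf φ' = 2 * orderOf φ ∨ orderOf φ = 2 * orderOf φ')
    ∧ (max (orderOf φ) (orderOf φ') = min (orderOf φ) (orderOf φ')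
       ∨ max (orderOf φ) (orderOf φ') = 2 * min (orderOf φ) (orderOf φ')) := by
  have hne : φ ≠ 0 := by rintro rfl; simp at hprod
  have hne' : φ' ≠ 0 := by rintro rfl; simp at hprod
  set u : Kˣ := Units.mk0 φ hne with hu
  set v : Kˣ := Units.mk0 φ' hne' with hv
  have huv : u * v = -1 := by ext; simpa [hu, hv] using hprod
  have hou : orderOf φ = orderOf u := by rw [← orderOf_units, Units.val_mk0]
  have hov : orderOf φ' = orderOf v := by rw [← orderOf_units, Units.val_mk0]
  rw [hou, hov]
  have hv' : v = -u⁻¹ := by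
    apply mul_left_cancel (a := u)
    rw [huv, mul_neg, mul_inv_cancel]
  have hu' : u = -v⁻¹ := by
    apply mul_left_cancel (a := v)
    rw [mul_comm] at huv
    rw [huv, mul_neg, mul_inv_cancel]
  set n := orderOf u with hn
  set m := orderOf v with hm
  have hnpos : 0 < n := orderOf_pos u
  have hmpos : 0 < m := orderOf_pos v
  have key : n = m ∨ m = 2 * n ∨ n = 2 * m := by
    by_cases hneg : (-1 : Kˣ) = 1
    · left
      have hvv : v = u⁻¹ := by rw [hv', ← neg_one_mul, hneg, one_mul]
      rw [hn, hm, hvv, orderOf_inv]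
    · rcases Nat.even_or_odd n with hen | hon
      · rcases Nat.even_or_odd m with hem | hom
        · exact Or.inl
            (Nat.dvd_antisymm (aux_even_dvd v u hu' hem) (aux_even_dvd u v hv' hen))
        · -- n even, m odd ⇒ n = 2m
          right; right
          obtain ⟨h1, h2⟩ := aux_odd v u hu' hom
          have hdvd : n ∣ 2 * m := orderOf_dvd_of_pow_eq_one h2
          have hmd : m ∣ n := aux_even_dvd u v hv' hen
          refine aux_nat_two m n hmpos ?_ hmd hdvd
          intro h
          exact (Nat.not_odd_iff_even.mpr (h ▸ hen)) hom
      · -- n odd ⇒ m = 2n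
        right; left
        obtain ⟨h1, h2⟩ := aux_odd u v hv' hon
        have hdvd : m ∣ 2 * n := orderOf_dvd_of_pow_eq_one h2
        have hndvd : ¬ m ∣ n := by
          intro hd
          have : v ^ n = 1 := orderOf_dvd_iff_pow_eq_one.mp hd
          rw [this] at h1
          exact hneg h1.symm
        have hnd : n ∣ m := by
          rcases Nat.even_or_odd m with he | ho
          · exact aux_even_dvd v u hu' he
          · exact absurd ((Nat.coprime_two_right.mpr ho).dvd_of_dvd_mul_left hdvd) hndvd
        refine aux_nat_two n m hnpos (fun h => hndvd (h ▸ dvd_refl m)) hnd hdvd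
  refine ⟨key, ?_⟩
  rcases key with h | h | h <;> omega
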